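/- Fix a real number a with 3/4 < a < 1. Consider bootstrap percolation on Q_n where each vertex is initially infected independently with probability p = n^{a-1} − n^{a/2 − 1}, and let the infection threshold be r = ⌈n^a⌉ + 3. Then there exists an absolute constant δ > 0 such that for all sufficiently large n and every vertex x ∈ V(Q_n), P(x ∈ A_{1,r}) ≥ δ. -/

import Mathlib

open Finset Filter
open scoped Classical

noncomputable section

/-- The infected set after `i` steps of `r`-neighbour bootstrap percolation on the graph `G`,
starting from the initial infected set `A0`:
`A_{i+1} = A_i ∪ {v : |N(v) ∩ A_i| ≥ r}`. -/
def bootSets {V : Type*} [Fintype V] [DecidableEq V] (G : SimpleGraph V) (r : ℕ)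
    (A0 : Finset V) : ℕ → Finset V
  | 0 => A0
  | i + 1 =>
      bootSets G r A0 i ∪
        Finset.univ.filter fun v => r ≤ (G.neighborFinset v ∩ bootSets G r A0 i).card

/-- `A0` percolates under the `r`-neighbour bootstrap process on `G`. -/
def percolates {V : Type*} [Fintype V] [DecidableEq V] (G : SimpleGraph V) (r : ℕ)
    (A0 : Finset V) : Prop :=
  ∃ i, bootSets G r A0 i = Finset.univ

/-- The probability that the initial infected set is exactly `A`, when every vertex is
infected independently with probability `p`. -/
def configProb {V : Type*} [Fintype V] [DecidableEq V] (p : ℝ) (A : Finset V) : ℝ :=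
  p ^ A.card * (1 - p) ^ (Fintype.card V - A.card)

/-- The probability of the event `E` about the initial infected set, when every vertex is
infected independently with probability `p`. -/
def probEvent {V : Type*} [Fintype V] [DecidableEq V] (p : ℝ) (E : Finset V → Prop) : ℝ :=
  ∑ A : Finset V, if E A then configProb p A else 0

/-- The generalized hypercube `Q_{k,n}`: vertices are `{0,1}^n`, two vertices being adjacent
iff their Hamming distance is between `1` and `k`.  The usual hypercube `Q_n` is
`cubeGraph n 1`. -/
def cubeGraph (n k : ℕ) : SimpleGraph (Fin n → Bool) where
  Adj x y := 1 ≤ hammingDist x y ∧ hammingDist x y ≤ k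
  symm := by
    constructor
    intro x y h
    rwa [hammingDist_comm]
  loopless := by
    constructor
    intro x h
    simp [hammingDist_self] at h

/-- The critical probability for `r`-neighbour bootstrap percolation on `Q_{k,n}` where every
vertex is initially infected independently with probability `p`:
the supremum of all `p ∈ (0,1)` for which percolation has probability at most `1/2`. -/
def critProb (n k r : ℕ) : ℝ :=
  sSup {p : ℝ | p ∈ Set.Ioo (0 : ℝ) 1 ∧
    probEvent p (fun A0 => percolates (cubeGraph n k) r A0) ≤ 1 / 2}

/-- The `Boot1(t)` process with base threshold `r`: at step `1` the threshold is `r - t`,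
afterwards it is `r`. -/
def boot1Sets {V : Type*} [Fintype V] [DecidableEq V] (G : SimpleGraph V) (r t : ℕ)
    (A0 : Finset V) : ℕ → Finset V
  | 0 => A0
  | 1 => A0 ∪ Finset.univ.filter fun v => r - t ≤ (G.neighborFinset v ∩ A0).card
  | i + 2 =>
      boot1Sets G r t A0 (i + 1) ∪
        Finset.univ.filter fun v =>
          r ≤ (G.neighborFinset v ∩ boot1Sets G r t A0 (i + 1)).card

/-- The `Boot2(t)` (= `Boot3(t)`) process with base threshold `r`: at step `1` the threshold
is `r - 2t`, at step `2` it is `r - t`, and afterwards it is `r`. -/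
def boot2Sets {V : Type*} [Fintype V] [DecidableEq V] (G : SimpleGraph V) (r t : ℕ)
    (A0 : Finset V) : ℕ → Finset V
  | 0 => A0
  | 1 => A0 ∪ Finset.univ.filter fun v => r - 2 * t ≤ (G.neighborFinset v ∩ A0).card
  | 2 =>
      boot2Sets G r t A0 1 ∪
        Finset.univ.filter fun v =>
          r - t ≤ (G.neighborFinset v ∩ boot2Sets G r t A0 1).card
  | i + 3 =>
      boot2Sets G r t A0 (i + 2) ∪
        Finset.univ.filter fun v =>
          r ≤ (G.neighborFinset v ∩ boot2Sets G r t A0 (i + 2)).card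

set_option maxHeartbeats 1600000

section Aux

noncomputable def binT (n : ℕ) (p : ℝ) (k : ℕ) : ℝ :=
  (n.choose k : ℝ) * p ^ k * (1 - p) ^ (n - k)

lemma binT_sum (n : ℕ) (p : ℝ) : ∑ k ∈ range (n + 1), binT n p k = 1 := by
  have h := add_pow p (1 - p) n
  simp only [add_sub_cancel, one_pow] at h
  rw [eq_comm] at h
  rw [show (1:ℝ) = (p + (1-p))^n by rw [add_sub_cancel, one_pow], add_pow]
  refine Finset.sum_congr rfl fun k hk => ?_
  unfold binT; ring

lemma key_choose (n k : ℕ) (hn : 1 ≤ n) (hk : k ≤ n - 1) :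
    ((k : ℝ) + 1) * ((n.choose (k+1) : ℝ)) = (n : ℝ) * ((n-1).choose k : ℝ) := by
  have h := Nat.add_one_mul_choose_eq (n - 1) k
  have h1 : (n - 1) + 1 = n := Nat.succ_pred_eq_of_pos hn
  rw [h1] at h
  have := congrArg (fun m : ℕ => (m : ℝ)) h
  push_cast at this
  linarith

lemma binT_mean (n : ℕ) (p : ℝ) :
    ∑ k ∈ range (n + 1), (k : ℝ) * binT n p k = n * p := by
  rcases Nat.eq_zero_or_pos n with h0 | hn
  · subst h0; simp [binT]
  have hshift : ∑ k ∈ range (n + 1), (k : ℝ) * binT n p k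
      = ∑ k ∈ range n, ((k:ℝ)+1) * binT n p (k+1) := by
    rw [Finset.sum_range_succ']
    push_cast
    simp
  rw [hshift]
  have hn1 : n = (n - 1) + 1 := (Nat.succ_pred_eq_of_pos hn).symm
  have : ∑ k ∈ range n, ((k:ℝ)+1) * binT n p (k+1)
      = ∑ k ∈ range ((n-1)+1), (n : ℝ) * p * binT (n-1) p k := by
    rw [← hn1]
    refine Finset.sum_congr rfl fun k hk => ?_
    rw [Finset.mem_range] at hk
    unfold binT
    have h1 : n - (k+1) = (n-1) - k := by omega
    rw [h1, ← mul_assoc, ← mul_assoc]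
    rw [show ((k:ℝ)+1) * (n.choose (k+1) : ℝ) * p ^ (k+1)
        = (((k:ℝ)+1) * (n.choose (k+1) : ℝ)) * p ^ (k+1) by ring,
      key_choose n k hn (by omega)]
    ring
  rw [this, ← Finset.mul_sum, binT_sum, mul_one]

lemma binT_second (n : ℕ) (p : ℝ) :
    ∑ k ∈ range (n + 1), (k : ℝ) * ((k:ℝ) - 1) * binT n p k
      = (n : ℝ) * ((n:ℝ) - 1) * p ^ 2 := by
  rcases Nat.lt_or_ge n 2 with h2 | h2
  · interval_cases n
    · simp [binT]
    · simp [binT, Finset.sum_range_succ]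
  have hshift : ∑ k ∈ range (n + 1), (k : ℝ) * ((k:ℝ)-1) * binT n p k
      = ∑ k ∈ range (n-1), ((k:ℝ)+2) * ((k:ℝ)+1) * binT n p (k+2) := by
    rw [Finset.sum_range_succ']
    rw [show n = (n-1)+1 by omega, Finset.sum_range_succ']
    rw [show n - 1 + 1 = n by omega]
    push_cast
    rw [show (1:ℝ) * (1 - 1) * binT n p 1 = 0 by ring,
      show (0:ℝ) * (0 - 1) * binT n p 0 = 0 by ring, add_zero, add_zero]
    refine Finset.sum_congr rfl fun k hk => ?_
    rw [show k + 1 + 1 = k + 2 from rfl]; ring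
  rw [hshift]
  have : ∑ k ∈ range (n-1), ((k:ℝ)+2) * ((k:ℝ)+1) * binT n p (k+2)
      = ∑ k ∈ range ((n-2)+1), (n:ℝ) * ((n:ℝ)-1) * p^2 * binT (n-2) p k := by
    rw [show (n-2)+1 = n-1 by omega]
    refine Finset.sum_congr rfl fun k hk => ?_
    rw [Finset.mem_range] at hk
    unfold binT
    have h1 : n - (k+2) = (n-2) - k := by omega
    have e1 : ((k:ℝ)+2) * (n.choose (k+2) : ℝ) = (n:ℝ) * ((n-1).choose (k+1) : ℝ) := by
      have := key_choose n (k+1) (by omega) (by omega)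
      push_cast at this ⊢
      linarith
    have e2 : ((k:ℝ)+1) * ((n-1).choose (k+1) : ℝ) = ((n:ℝ)-1) * ((n-2).choose k : ℝ) := by
      have := key_choose (n-1) k (by omega) (by omega)
      have hc : ((n:ℝ) - 1) = ((n-1 : ℕ) : ℝ) := by
        have : (1:ℕ) ≤ n := by omega
        push_cast [this]; ring
      rw [hc]
      rw [show n - 1 - 1 = n - 2 by omega] at this
      linarith
    rw [h1]
    calc ((k:ℝ)+2) * ((k:ℝ)+1) * ((n.choose (k+2) : ℝ) * p ^ (k+2) * (1-p) ^ ((n-2) - k))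
        = (((k:ℝ)+2) * (n.choose (k+2):ℝ)) * ((k:ℝ)+1) * p ^ (k+2) * (1-p) ^ ((n-2)-k) := by ring
      _ = ((n:ℝ) * ((n-1).choose (k+1) : ℝ)) * ((k:ℝ)+1) * p ^ (k+2) * (1-p) ^ ((n-2)-k) := by rw [e1]
      _ = (n:ℝ) * (((k:ℝ)+1) * ((n-1).choose (k+1) : ℝ)) * p ^ (k+2) * (1-p) ^ ((n-2)-k) := by ring
      _ = (n:ℝ) * (((n:ℝ)-1) * ((n-2).choose k : ℝ)) * p ^ (k+2) * (1-p) ^ ((n-2)-k) := by rw [e2]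
      _ = (n:ℝ) * ((n:ℝ)-1) * p^2 * (((n-2).choose k : ℝ) * p ^ k * (1-p) ^ ((n-2)-k)) := by ring
  rw [this, ← Finset.mul_sum, binT_sum, mul_one]

lemma binT_var (n : ℕ) (p : ℝ) :
    ∑ k ∈ range (n + 1), ((k:ℝ) - n * p)^2 * binT n p k = n * p * (1 - p) := by
  have e : ∀ k : ℕ, ((k:ℝ) - n*p)^2 * binT n p k
      = (k:ℝ) * ((k:ℝ)-1) * binT n p k + (1 - 2*(n*p)) * ((k:ℝ) * binT n p k)
        + (n*p)^2 * binT n p k := by intro k; ring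
  rw [Finset.sum_congr rfl fun k _ => e k]
  rw [Finset.sum_add_distrib, Finset.sum_add_distrib, binT_second, ← Finset.mul_sum,
    binT_mean, ← Finset.mul_sum, binT_sum]
  ring


lemma binT_nonneg (n : ℕ) (p : ℝ) (hp : 0 ≤ p) (hp1 : p ≤ 1) (k : ℕ) :
    0 ≤ binT n p k := by
  unfold binT
  apply mul_nonneg (mul_nonneg (by positivity) (pow_nonneg hp k)) (pow_nonneg (by linarith) _)

lemma binT_pos (n : ℕ) (p : ℝ) (hp : 0 < p) (hp1 : p < 1) (k : ℕ) (hk : k ≤ n) :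
    0 < binT n p k := by
  unfold binT
  exact mul_pos (mul_pos (by exact_mod_cast Nat.choose_pos hk) (pow_pos hp k))
    (pow_pos (by linarith) _)

lemma binT_step_identity (n k : ℕ) (p : ℝ) (hk : k + 1 ≤ n) :
    binT n p (k+1) * (((k:ℝ)+1) * (1-p)) = binT n p k * (((n:ℝ)-(k:ℝ)) * p) := by
  unfold binT
  have h1 : n - k = (n - (k+1)) + 1 := by omega
  have h2 : ((n.choose (k+1) : ℕ) : ℝ) * ((k:ℝ)+1) = (n.choose k : ℝ) * ((n:ℝ)-(k:ℝ)) := by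
    have := Nat.choose_succ_right_eq n k
    have hc := congrArg (fun m : ℕ => (m : ℝ)) this
    push_cast at hc
    rw [Nat.cast_sub (by omega)] at hc
    push_cast at hc
    linarith
  rw [h1, pow_succ]
  linear_combination (p ^ (k+1) * (1-p) ^ (n-(k+1)) * (1-p)) * h2

private lemma cancel_right {a b c : ℝ} (hc : 0 < c) (h : a * c ≤ b * c) : a ≤ b :=
  le_of_mul_le_mul_right h hc

lemma binT_ratio (n : ℕ) (p : ℝ) (hp : 0 < p) (hp2 : p ≤ 1/2)
    (hσ : (Real.sqrt (n*p*(1-p))) ^ 2 = n*p*(1-p))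
    (h48 : 48 ≤ Real.sqrt (n*p*(1-p)))
    (hn : (n:ℝ)*p + 3*Real.sqrt (n*p*(1-p)) + 1 ≤ n)
    (k : ℕ) (hk1 : (n:ℝ)*p - 3*Real.sqrt (n*p*(1-p)) ≤ k)
    (hk2 : (k:ℝ) + 1 ≤ (n:ℝ)*p + 3*Real.sqrt (n*p*(1-p))) :
    (Real.sqrt (n*p*(1-p)) - 4)/(Real.sqrt (n*p*(1-p)) + 4) * binT n p k ≤ binT n p (k+1)
    ∧ (Real.sqrt (n*p*(1-p)) - 4)/(Real.sqrt (n*p*(1-p)) + 4) * binT n p (k+1) ≤ binT n p k := by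
  set σ := Real.sqrt (n*p*(1-p)) with hσdef
  have hq : (0:ℝ) < 1 - p := by linarith
  have hq1 : 1 - p ≤ 1 := by linarith
  have hσpos : (0:ℝ) < σ := by linarith
  have hσ4 : (0:ℝ) ≤ σ - 4 := by linarith
  have hρden : (0:ℝ) < σ + 4 := by linarith
  have hμ0 : (0:ℝ) ≤ (n:ℝ)*p := by positivity
  have hkn : (k:ℝ)+1 ≤ n := by linarith
  have hknn : k + 1 ≤ n := by exact_mod_cast hkn
  have hid := binT_step_identity n k p hknn
  have hx : 0 < binT n p k := binT_pos n p hp (by linarith) k (by omega)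
  have hA0 : (0:ℝ) < ((k:ℝ)+1) * (1-p) := by positivity
  have hσp : σ * p ≤ σ := mul_le_of_le_one_right hσpos.le (by linarith)
  have hσq : σ * (1-p) ≤ σ := mul_le_of_le_one_right hσpos.le (by linarith)
  have hσpp : 0 ≤ σ * p := by positivity
  have hσqq : 0 ≤ σ * (1-p) := by positivity
  have hA : ((k:ℝ)+1) * (1-p) ≤ σ^2 + 3*σ := by
    nlinarith [mul_le_mul_of_nonneg_right hk2 hq.le]
  have hB : σ^2 - 3*σ ≤ ((n:ℝ)-(k:ℝ)) * p := by
    nlinarith [mul_le_mul_of_nonneg_right (by linarith : (k:ℝ) ≤ (n:ℝ)*p + 3*σ) hp.le]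
  have hC : ((n:ℝ)-(k:ℝ)) * p ≤ σ^2 + 3*σ := by
    nlinarith [mul_le_mul_of_nonneg_right hk1 hp.le]
  have hD : σ^2 - 3*σ ≤ ((k:ℝ)+1) * (1-p) := by
    nlinarith [mul_le_mul_of_nonneg_right (by linarith : (n:ℝ)*p - 3*σ ≤ (k:ℝ)+1) hq.le]
  have key1 : (σ-4) * (((k:ℝ)+1) * (1-p)) ≤ (σ+4) * (((n:ℝ)-(k:ℝ)) * p) := by
    nlinarith [mul_le_mul_of_nonneg_left hA hσ4, mul_le_mul_of_nonneg_left hB hρden.le,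
      sq_nonneg σ]
  have key2 : (σ-4) * (((n:ℝ)-(k:ℝ)) * p) ≤ (σ+4) * (((k:ℝ)+1) * (1-p)) := by
    nlinarith [mul_le_mul_of_nonneg_left hC hσ4, mul_le_mul_of_nonneg_left hD hρden.le,
      sq_nonneg σ]
  constructor
  · rw [div_mul_eq_mul_div, div_le_iff₀ hρden]
    refine cancel_right hA0 ?_
    calc (σ-4) * binT n p k * (((k:ℝ)+1) * (1-p))
        = binT n p k * ((σ-4) * (((k:ℝ)+1) * (1-p))) := by ring
      _ ≤ binT n p k * ((σ+4) * (((n:ℝ)-(k:ℝ)) * p)) :=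
          mul_le_mul_of_nonneg_left key1 hx.le
      _ = (σ+4) * (binT n p k * (((n:ℝ)-(k:ℝ)) * p)) := by ring
      _ = (σ+4) * (binT n p (k+1) * (((k:ℝ)+1) * (1-p))) := by rw [hid]
      _ = binT n p (k+1) * (σ+4) * (((k:ℝ)+1) * (1-p)) := by ring
  · rw [div_mul_eq_mul_div, div_le_iff₀ hρden]
    refine cancel_right hA0 ?_
    calc (σ-4) * binT n p (k+1) * (((k:ℝ)+1) * (1-p))
        = (σ-4) * (binT n p (k+1) * (((k:ℝ)+1) * (1-p))) := by ring
      _ = (σ-4) * (binT n p k * (((n:ℝ)-(k:ℝ)) * p)) := by rw [hid]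
      _ = binT n p k * ((σ-4) * (((n:ℝ)-(k:ℝ)) * p)) := by ring
      _ ≤ binT n p k * ((σ+4) * (((k:ℝ)+1) * (1-p))) :=
          mul_le_mul_of_nonneg_left key2 hx.le
      _ = binT n p k * (σ+4) * (((k:ℝ)+1) * (1-p)) := by ring

lemma binT_chain_up (n : ℕ) (p ρ : ℝ) (hρ : 0 ≤ ρ) (a b : ℝ)
    (hstep : ∀ k : ℕ, a ≤ k → (k:ℝ)+1 ≤ b → ρ * binT n p k ≤ binT n p (k+1)) :
    ∀ d j : ℕ, a ≤ j → (j:ℝ)+d ≤ b → ρ^d * binT n p j ≤ binT n p (j+d) := by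
  intro d
  induction d with
  | zero => intro j _ _; simp
  | succ d ih =>
      intro j hj hjd
      push_cast at hjd
      have h1 : ρ^d * binT n p j ≤ binT n p (j+d) := ih j hj (by push_cast; linarith)
      have h2 : ρ * binT n p (j+d) ≤ binT n p ((j+d)+1) :=
        hstep (j+d) (by push_cast; linarith [Nat.cast_nonneg (α := ℝ) d])
          (by push_cast; linarith)
      have h3 : ρ * (ρ^d * binT n p j) ≤ ρ * binT n p (j+d) :=
        mul_le_mul_of_nonneg_left h1 hρ
      calc ρ^(d+1) * binT n p j = ρ * (ρ^d * binT n p j) := by ring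
        _ ≤ ρ * binT n p (j+d) := h3
        _ ≤ binT n p ((j+d)+1) := h2
        _ = binT n p (j+(d+1)) := rfl

lemma binT_chain_down (n : ℕ) (p ρ : ℝ) (hρ : 0 ≤ ρ) (a b : ℝ)
    (hstep : ∀ k : ℕ, a ≤ k → (k:ℝ)+1 ≤ b → ρ * binT n p (k+1) ≤ binT n p k) :
    ∀ d j : ℕ, a ≤ j → (j:ℝ)+d ≤ b → ρ^d * binT n p (j+d) ≤ binT n p j := by
  intro d
  induction d with
  | zero => intro j _ _; simp
  | succ d ih =>
      intro j hj hjd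
      push_cast at hjd
      have h2 : ρ * binT n p ((j+d)+1) ≤ binT n p (j+d) :=
        hstep (j+d) (by push_cast; linarith [Nat.cast_nonneg (α := ℝ) d])
          (by push_cast; linarith)
      have h3 : ρ^d * (ρ * binT n p ((j+d)+1)) ≤ ρ^d * binT n p (j+d) :=
        mul_le_mul_of_nonneg_left h2 (pow_nonneg hρ d)
      have h1 : ρ^d * binT n p (j+d) ≤ binT n p j := ih j hj (by push_cast; linarith)
      calc ρ^(d+1) * binT n p (j+(d+1)) = ρ^d * (ρ * binT n p ((j+d)+1)) := by
              show ρ^(d+1) * binT n p ((j+d)+1) = _; ring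
        _ ≤ ρ^d * binT n p (j+d) := h3
        _ ≤ binT n p j := h1

lemma binom_tail (n r L : ℕ) (p : ℝ) (hp : 0 < p) (hp2 : p ≤ 1/2)
    (h48 : 48 ≤ Real.sqrt ((n:ℝ)*p*(1-p)))
    (hr1 : (n:ℝ)*p ≤ r)
    (hr2 : (r:ℝ) + L + 1 ≤ (n:ℝ)*p + 3*Real.sqrt ((n:ℝ)*p*(1-p)))
    (hL : Real.sqrt ((n:ℝ)*p*(1-p)) ≤ L)
    (hn : (n:ℝ)*p + 3*Real.sqrt ((n:ℝ)*p*(1-p)) + 1 ≤ n) :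
    Real.exp (-97) / 9 ≤ ∑ k ∈ Icc r (r+L), binT n p k := by
  set σ := Real.sqrt ((n:ℝ)*p*(1-p)) with hσdef
  set μ := (n:ℝ)*p with hμdef
  have hq : (0:ℝ) < 1 - p := by linarith
  have hσsq : σ^2 = (n:ℝ)*p*(1-p) := Real.sq_sqrt (by positivity)
  have hσpos : (0:ℝ) < σ := by linarith
  have hμ0 : (0:ℝ) ≤ μ := by positivity
  have hbnn : ∀ k, 0 ≤ binT n p k := binT_nonneg n p hp.le (by linarith)
  -- the set J
  set J : Finset ℕ := (range (n+1)).filter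
    (fun k => μ - 3*σ ≤ (k:ℝ) ∧ (k:ℝ) ≤ μ + 3*σ) with hJdef
  have hJsub : J ⊆ range (n+1) := filter_subset _ _
  -- Chebyshev
  have hcheb : ∑ k ∈ range (n+1) \ J, binT n p k ≤ 1/9 := by
    have h1 : ∀ k ∈ range (n+1) \ J, 9*σ^2 * binT n p k ≤ ((k:ℝ) - μ)^2 * binT n p k := by
      intro k hk
      rw [Finset.mem_sdiff, hJdef, mem_filter] at hk
      obtain ⟨hkr, hknot⟩ := hk
      have : ¬(μ - 3*σ ≤ (k:ℝ) ∧ (k:ℝ) ≤ μ + 3*σ) := fun h => hknot ⟨hkr, h⟩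
      push_neg at this
      have hsq : 9*σ^2 ≤ ((k:ℝ) - μ)^2 := by
        rcases le_or_gt (μ - 3*σ) (k:ℝ) with h | h
        · have := this h
          nlinarith
        · nlinarith
      exact mul_le_mul_of_nonneg_right hsq (hbnn k)
    have h2 : 9*σ^2 * ∑ k ∈ range (n+1) \ J, binT n p k
        ≤ ∑ k ∈ range (n+1) \ J, ((k:ℝ) - μ)^2 * binT n p k := by
      rw [Finset.mul_sum]; exact Finset.sum_le_sum h1
    have h3 : ∑ k ∈ range (n+1) \ J, ((k:ℝ) - μ)^2 * binT n p k
        ≤ ∑ k ∈ range (n+1), ((k:ℝ) - μ)^2 * binT n p k :=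
      Finset.sum_le_sum_of_subset_of_nonneg (Finset.sdiff_subset)
        (fun k _ _ => mul_nonneg (sq_nonneg _) (hbnn k))
    have h4 := binT_var n p
    have h5 : (n:ℝ)*p*(1-p) = σ^2 := hσsq.symm
    nlinarith [sq_nonneg σ, mul_pos hσpos hσpos]
  have hJ89 : 8/9 ≤ ∑ k ∈ J, binT n p k := by
    have := Finset.sum_sdiff hJsub (f := binT n p)
    rw [binT_sum] at this
    linarith
  -- J is nonempty, get max element
  have hJne : J.Nonempty := by
    by_contra h
    rw [Finset.not_nonempty_iff_eq_empty] at h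
    rw [h, Finset.sum_empty] at hJ89
    linarith
  obtain ⟨k0, hk0J, hk0max⟩ := Finset.exists_max_image J (binT n p) hJne
  -- card bound
  have hJcard : (J.card : ℝ) ≤ 6*σ + 2 := by
    set A := ⌈μ - 3*σ⌉₊ with hA
    set B := ⌊μ + 3*σ⌋₊ with hB
    have hsub2 : J ⊆ Icc A B := by
      intro k hk
      rw [hJdef, mem_filter] at hk
      rw [Finset.mem_Icc]
      exact ⟨Nat.ceil_le.mpr hk.2.1, Nat.le_floor hk.2.2⟩
    have hcard := Finset.card_le_card hsub2
    rw [Nat.card_Icc] at hcard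
    rcases le_or_gt A (B+1) with h | h
    · have h1 : (J.card : ℝ) ≤ ((B + 1 - A : ℕ) : ℝ) := by exact_mod_cast hcard
      rw [Nat.cast_sub h] at h1
      have h2 : (B : ℝ) ≤ μ + 3*σ := Nat.floor_le (by positivity)
      have h3 : μ - 3*σ ≤ (A : ℝ) := Nat.le_ceil _
      push_cast at h1
      linarith
    · have : B + 1 - A = 0 := by omega
      rw [this] at hcard
      have : J.card = 0 := by omega
      rw [this]
      norm_num
      positivity
  -- lower bound on binT at k0
  have hk0b : 8/(9*(6*σ+2)) ≤ binT n p k0 := by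
    have h1 : ∑ k ∈ J, binT n p k ≤ J.card • binT n p k0 :=
      Finset.sum_le_card_nsmul J _ _ hk0max
    rw [nsmul_eq_mul] at h1
    have h2 : (J.card : ℝ) * binT n p k0 ≤ (6*σ+2) * binT n p k0 :=
      mul_le_mul_of_nonneg_right hJcard (hbnn k0)
    rw [div_le_iff₀ (by positivity)]
    linarith
  -- k0 in the window
  have hk0mem : μ - 3*σ ≤ (k0:ℝ) ∧ (k0:ℝ) ≤ μ + 3*σ := by
    have := hk0J
    rw [hJdef, mem_filter] at this
    exact this.2
  -- ratio step hypotheses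
  set ρ := (σ - 4)/(σ + 4) with hρdef
  have hρnn : 0 ≤ ρ := by
    apply div_nonneg <;> linarith
  have hstep_up : ∀ k : ℕ, μ - 3*σ ≤ (k:ℝ) → (k:ℝ)+1 ≤ μ + 3*σ →
      ρ * binT n p k ≤ binT n p (k+1) := fun k h1 h2 =>
    (binT_ratio n p hp hp2 hσsq h48 hn k h1 h2).1
  have hstep_down : ∀ k : ℕ, μ - 3*σ ≤ (k:ℝ) → (k:ℝ)+1 ≤ μ + 3*σ →
      ρ * binT n p (k+1) ≤ binT n p k := fun k h1 h2 =>
    (binT_ratio n p hp hp2 hσsq h48 hn k h1 h2).2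
  -- pointwise lower bound on the target interval
  have hpoint : ∀ k ∈ Icc r (r+L), Real.exp (-97) * (8/(9*(6*σ+2))) ≤ binT n p k := by
    intro k hk
    rw [Finset.mem_Icc] at hk
    have hkc1 : (r:ℝ) ≤ (k:ℝ) := by exact_mod_cast hk.1
    have hkc2 : (k:ℝ) ≤ (r:ℝ) + (L:ℝ) := by exact_mod_cast hk.2
    have hkwin1 : μ - 3*σ ≤ (k:ℝ) := by linarith
    have hkwin2 : (k:ℝ) ≤ μ + 3*σ := by linarith
    -- compare with k0
    have hcomp : ∃ d : ℕ, (d:ℝ) ≤ 6*σ ∧ ρ^d * binT n p k0 ≤ binT n p k := by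
      rcases le_total k0 k with h | h
      · refine ⟨k - k0, ?_, ?_⟩
        · have : ((k - k0 : ℕ) : ℝ) = (k:ℝ) - (k0:ℝ) := by
            rw [Nat.cast_sub h]
          rw [this]
          linarith [hk0mem.1]
        · have := binT_chain_up n p ρ hρnn (μ - 3*σ) (μ + 3*σ) hstep_up (k - k0) k0
            hk0mem.1 (by rw [Nat.cast_sub h]; linarith)
          rwa [Nat.add_sub_cancel' h] at this
      · refine ⟨k0 - k, ?_, ?_⟩
        · have : ((k0 - k : ℕ) : ℝ) = (k0:ℝ) - (k:ℝ) := by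
            rw [Nat.cast_sub h]
          rw [this]
          linarith [hk0mem.2]
        · have := binT_chain_down n p ρ hρnn (μ - 3*σ) (μ + 3*σ) hstep_down (k0 - k) k
            hkwin1 (by rw [Nat.cast_sub h]; linarith [hk0mem.2])
          rwa [Nat.add_sub_cancel' h] at this
    obtain ⟨d, hd1, hd2⟩ := hcomp
    -- ρ^d ≥ exp(-97)
    have hρexp : Real.exp (-(16/(σ+4))) ≤ ρ := by
      have h1 : Real.exp (16/(σ+4)) ≥ 1 + 16/(σ+4) := by
        linarith [Real.add_one_le_exp (16/(σ+4))]
      have h2 : Real.exp (-(16/(σ+4))) = 1 / Real.exp (16/(σ+4)) := by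
        rw [Real.exp_neg]; ring
      rw [h2, hρdef]
      rw [div_le_div_iff₀ (Real.exp_pos _) (by linarith)]
      have h3 : (1 + 16/(σ+4)) * (σ - 4) ≤ Real.exp (16/(σ+4)) * (σ-4) := by
        apply mul_le_mul_of_nonneg_right h1 (by linarith)
      have hd : (0:ℝ) < σ + 4 := by linarith
      have e : (1 + 16/(σ+4)) * (σ-4) = (σ-4) + 16*(σ-4)/(σ+4) := by
        field_simp
      have h5 : (8:ℝ) ≤ 16*(σ-4)/(σ+4) := by
        rw [le_div_iff₀ hd]; nlinarith
      have h4 : 1 * (σ+4) ≤ (1 + 16/(σ+4)) * (σ - 4) := by rw [e]; linarith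
      linarith
    have hρd : Real.exp (-97) ≤ ρ^d := by
      have h1 : Real.exp (-(16/(σ+4)))^d = Real.exp ((d:ℝ) * (-(16/(σ+4)))) := by
        rw [Real.exp_nat_mul]
      have h2 : Real.exp (-97) ≤ Real.exp ((d:ℝ) * (-(16/(σ+4)))) := by
        apply Real.exp_le_exp.mpr
        rw [mul_neg]
        have hd : (0:ℝ) < σ + 4 := by linarith
        have h5 : (d:ℝ) * (16/(σ+4)) ≤ 6*σ * (16/(σ+4)) :=
          mul_le_mul_of_nonneg_right hd1 (by positivity)
        have h6 : 6*σ * (16/(σ+4)) ≤ 97 := by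
          have e2 : 6*σ * (16/(σ+4)) = 96*σ/(σ+4) := by field_simp; ring
          rw [e2, div_le_iff₀ hd]
          nlinarith
        linarith
      calc Real.exp (-97) ≤ Real.exp ((d:ℝ) * (-(16/(σ+4)))) := h2
        _ = Real.exp (-(16/(σ+4)))^d := h1.symm
        _ ≤ ρ^d := pow_le_pow_left₀ (Real.exp_pos _).le hρexp d
    calc Real.exp (-97) * (8/(9*(6*σ+2))) ≤ ρ^d * binT n p k0 := by
          apply mul_le_mul hρd hk0b (by positivity) (by positivity)
      _ ≤ binT n p k := hd2
  -- sum up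
  have hsum : (Icc r (r+L)).card • (Real.exp (-97) * (8/(9*(6*σ+2))))
      ≤ ∑ k ∈ Icc r (r+L), binT n p k :=
    Finset.card_nsmul_le_sum _ _ _ hpoint
  rw [Nat.card_Icc, nsmul_eq_mul] at hsum
  have hcard : ((r + L + 1 - r : ℕ) : ℝ) = (L:ℝ) + 1 := by
    have : r + L + 1 - r = L + 1 := by omega
    rw [this]; push_cast; ring
  rw [hcard] at hsum
  have hfinal : Real.exp (-97) / 9 ≤ ((L:ℝ)+1) * (Real.exp (-97) * (8/(9*(6*σ+2)))) := by
    have hL1 : σ ≤ (L:ℝ) := hL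
    have he : (0:ℝ) < Real.exp (-97) := Real.exp_pos _
    rw [div_le_iff₀ (by norm_num : (0:ℝ) < 9)]
    have h1 : ((L:ℝ)+1) * (Real.exp (-97) * (8/(9*(6*σ+2)))) * 9
        = Real.exp (-97) * (72 * ((L:ℝ)+1) / (9*(6*σ+2))) := by ring
    rw [h1]
    have h2 : (1:ℝ) ≤ 72 * ((L:ℝ)+1) / (9*(6*σ+2)) := by
      rw [le_div_iff₀ (by positivity)]
      nlinarith
    nlinarith
  linarith



variable {V : Type*} [Fintype V] [DecidableEq V]

lemma configProb_nonneg (p : ℝ) (hp : 0 ≤ p) (hp1 : p ≤ 1) (A : Finset V) :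
    0 ≤ configProb p A :=
  mul_nonneg (pow_nonneg hp _) (pow_nonneg (by linarith) _)

lemma probEvent_mono (p : ℝ) (hp : 0 ≤ p) (hp1 : p ≤ 1) {E1 E2 : Finset V → Prop}
    (h : ∀ A, E1 A → E2 A) : probEvent p E1 ≤ probEvent p E2 := by
  apply Finset.sum_le_sum
  intro A _
  by_cases h1 : E1 A
  · rw [if_pos h1, if_pos (h A h1)]
  · rw [if_neg h1]
    split_ifs with h2
    · exact configProb_nonneg p hp hp1 A
    · exact le_refl 0

lemma sum_powerset_pq (p : ℝ) (T : Finset V) :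
    ∑ C ∈ T.powerset, p ^ C.card * (1 - p) ^ (T.card - C.card) = 1 := by
  have h := Finset.prod_add (fun _ : V => p) (fun _ : V => 1 - p) T
  simp only [Finset.prod_const] at h
  rw [show p + (1 - p) = 1 by ring, one_pow] at h
  calc ∑ C ∈ T.powerset, p ^ C.card * (1 - p) ^ (T.card - C.card)
      = ∑ C ∈ T.powerset, p ^ C.card * (1 - p) ^ ((T \ C).card) :=
        Finset.sum_congr rfl fun C hC => by
          rw [Finset.card_sdiff_of_subset (Finset.mem_powerset.mp hC)]
    _ = 1 := h.symm

lemma decomp_inter_union (S B C : Finset V) (hB : B ⊆ S) (hC : C ⊆ univ \ S) :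
    (B ∪ C) ∩ S = B ∧ (B ∪ C) \ S = C := by
  constructor
  · ext y
    simp only [mem_inter, mem_union]
    constructor
    · rintro ⟨hy1 | hy2, hyS⟩
      · exact hy1
      · exact absurd hyS (by simpa [Finset.mem_sdiff] using hC hy2)
    · intro hy
      exact ⟨Or.inl hy, hB hy⟩
  · ext y
    simp only [Finset.mem_sdiff, mem_union]
    constructor
    · rintro ⟨hy1 | hy2, hyS⟩
      · exact absurd (hB hy1) hyS
      · exact hy2
    · intro hy
      refine ⟨Or.inr hy, by simpa [Finset.mem_sdiff] using hC hy⟩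

lemma inter_union_sdiff_self (S A : Finset V) : (A ∩ S) ∪ (A \ S) = A := by
  ext y
  simp only [mem_union, mem_inter, Finset.mem_sdiff]
  tauto

lemma probEvent_inter_card (p : ℝ) (S : Finset V) (P : ℕ → Prop) :
    probEvent p (fun A => P (A ∩ S).card)
      = ∑ j ∈ range (S.card + 1), if P j then binT S.card p j else 0 := by
  unfold probEvent
  have hcards : S.card + (univ \ S).card = Fintype.card V := by
    rw [Finset.card_sdiff_of_subset (Finset.subset_univ S), Finset.card_univ]
    have := Finset.card_le_card (Finset.subset_univ S)
    rw [Finset.card_univ] at this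
    omega
  have step1 : ∑ A : Finset V, (if P (A ∩ S).card then configProb p A else 0)
      = ∑ BC ∈ S.powerset ×ˢ (univ \ S).powerset,
          (if P BC.1.card then configProb p (BC.1 ∪ BC.2) else 0) := by
    refine Finset.sum_nbij' (fun A => (A ∩ S, A \ S)) (fun BC => BC.1 ∪ BC.2) ?_ ?_ ?_ ?_ ?_
    · intro A _
      rw [Finset.mem_product]
      exact ⟨Finset.mem_powerset.mpr Finset.inter_subset_right,
        Finset.mem_powerset.mpr (fun y hy => by
          rw [Finset.mem_sdiff] at hy ⊢
          exact ⟨Finset.mem_univ y, hy.2⟩)⟩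
    · intro BC _
      exact Finset.mem_univ _
    · intro A _
      exact inter_union_sdiff_self S A
    · intro BC hBC
      rw [Finset.mem_product, Finset.mem_powerset, Finset.mem_powerset] at hBC
      obtain ⟨h1, h2⟩ := decomp_inter_union S BC.1 BC.2 hBC.1 hBC.2
      ext <;> simp [h1, h2]
    · intro A _
      rw [inter_union_sdiff_self S A]
  rw [step1, Finset.sum_product]
  have step2 : ∀ B ∈ S.powerset, ∀ C ∈ (univ \ S).powerset,
      (if P B.card then configProb p (B ∪ C) else 0)
        = (if P B.card then p ^ B.card * (1-p) ^ (S.card - B.card) else 0)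
          * (p ^ C.card * (1-p) ^ ((univ \ S).card - C.card)) := by
    intro B hB C hC
    rw [Finset.mem_powerset] at hB hC
    have hdisj : Disjoint B C := by
      rw [Finset.disjoint_left]
      intro y hyB hyC
      have := hC hyC
      rw [Finset.mem_sdiff] at this
      exact this.2 (hB hyB)
    have hcard : (B ∪ C).card = B.card + C.card := Finset.card_union_of_disjoint hdisj
    have hb : B.card ≤ S.card := Finset.card_le_card hB
    have hc : C.card ≤ (univ \ S).card := Finset.card_le_card hC
    have hsplit : Fintype.card V - (B.card + C.card)
        = (S.card - B.card) + ((univ \ S).card - C.card) := by omega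
    unfold configProb
    rw [hcard, hsplit, pow_add, pow_add]
    split_ifs
    · ring
    · ring
  rw [Finset.sum_congr rfl (fun B hB => Finset.sum_congr rfl (step2 B hB))]
  have step3 : ∀ B ∈ S.powerset,
      ∑ C ∈ (univ \ S).powerset,
        (if P B.card then p ^ B.card * (1-p) ^ (S.card - B.card) else 0)
          * (p ^ C.card * (1-p) ^ ((univ \ S).card - C.card))
      = (if P B.card then p ^ B.card * (1-p) ^ (S.card - B.card) else 0) := by
    intro B _
    rw [← Finset.mul_sum, sum_powerset_pq, mul_one]
  rw [Finset.sum_congr rfl step3]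
  rw [Finset.sum_powerset]
  refine Finset.sum_congr rfl fun j hj => ?_
  rw [Finset.mem_range] at hj
  have hconst : ∀ B ∈ Finset.powersetCard j S,
      (if P B.card then p ^ B.card * (1-p) ^ (S.card - B.card) else 0)
        = (if P j then p ^ j * (1-p) ^ (S.card - j) else 0) := by
    intro B hB
    rw [Finset.mem_powersetCard] at hB
    rw [hB.2]
  rw [Finset.sum_congr rfl hconst, Finset.sum_const, Finset.card_powersetCard, nsmul_eq_mul]
  unfold binT
  split_ifs
  · ring
  · ring




lemma hamming_update (n : ℕ) (x : Fin n → Bool) (i : Fin n) :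
    hammingDist x (Function.update x i (!x i)) = 1 := by
  unfold hammingDist
  have : ({j | x j ≠ Function.update x i (!x i) j} : Finset (Fin n)) = {i} := by
    ext j
    simp only [Finset.mem_filter, Finset.mem_univ, true_and, Finset.mem_singleton,
      Set.mem_setOf_eq, Finset.mem_sort]
    by_cases hj : j = i
    · subst hj
      simp [Function.update_self]
    · simp [Function.update_of_ne hj, hj]
  rw [this, Finset.card_singleton]

lemma cube_neighborFinset_card (n : ℕ) (x : Fin n → Bool) :
    ((cubeGraph n 1).neighborFinset x).card = n := by
  have h := Finset.card_nbij (s := (univ : Finset (Fin n)))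
    (t := (cubeGraph n 1).neighborFinset x)
    (i := fun i => Function.update x i (!x i))
    (hi := ?_) (i_inj := ?_) (i_surj := ?_)
  · rw [← h, Finset.card_univ, Fintype.card_fin]
  · intro i _
    rw [Finset.mem_coe, SimpleGraph.mem_neighborFinset]
    constructor <;> rw [hamming_update]
  · intro i _ j _ hij
    by_contra hne
    have h1 := congrFun hij i
    simp only [Function.update_self, Function.update_of_ne (fun h : i = j => hne h)] at h1
    exact (Bool.not_ne_self (x i)) h1
  · intro y hy
    simp only [Finset.coe_univ, Set.image_univ, Set.mem_range]
    rw [Finset.mem_coe, SimpleGraph.mem_neighborFinset] at hy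
    obtain ⟨h1, h2⟩ := hy
    have hd : hammingDist x y = 1 := le_antisymm h2 h1
    unfold hammingDist at hd
    obtain ⟨i, hi⟩ := Finset.card_eq_one.mp hd
    refine ⟨i, ?_⟩
    have hmem : ∀ j : Fin n, x j ≠ y j ↔ j ∈ ({i} : Finset (Fin n)) := by
      intro j
      rw [← hi]
      simp
    funext j
    by_cases hj : j = i
    · subst hj
      have : x j ≠ y j := (hmem j).mpr (Finset.mem_singleton_self j)
      rw [Function.update_self]
      revert this
      cases x j <;> cases y j <;> simp
    · rw [Function.update_of_ne hj]
      have : ¬(x j ≠ y j) := fun h => hj (Finset.mem_singleton.mp ((hmem j).mp h))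
      push_neg at this
      exact this


end Aux

/-- For `3/4 < a < 1`, with initial infection probability
`p = n^{a-1} - n^{a/2-1}` and threshold `r = ⌈n^a⌉ + 3`, there is an absolute constant
`δ > 0` such that for all sufficiently large `n` and every vertex `x`,
`P(x ∈ A_{1,r}) ≥ δ`. -/
theorem step_one_infection_prob_Qn (a : ℝ) (ha₁ : 3 / 4 < a) (ha₂ : a < 1) :
    ∃ δ : ℝ, 0 < δ ∧ ∃ n₀ : ℕ, ∀ n ≥ n₀, ∀ x : Fin n → Bool,
      δ ≤ probEvent ((n : ℝ) ^ (a - 1) - (n : ℝ) ^ (a / 2 - 1))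
        (fun A0 => x ∈ bootSets (cubeGraph n 1) (⌈(n : ℝ) ^ a⌉₊ + 3) A0 1) := by
  have ha0 : 0 < a := by linarith
  refine ⟨Real.exp (-97) / 9, by positivity, ?_⟩
  have ev1 : ∀ᶠ n : ℕ in atTop, ((n:ℝ))^(a-1) ≤ 1/100 := by
    have h := tendsto_rpow_neg_atTop (by linarith : (0:ℝ) < 1 - a)
    rw [show -(1-a) = a - 1 by ring] at h
    exact (h.comp tendsto_natCast_atTop_atTop).eventually (eventually_le_nhds (by norm_num))
  have ev2 : ∀ᶠ n : ℕ in atTop, ((n:ℝ))^(a/2-1) ≤ 1/8 := by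
    have h := tendsto_rpow_neg_atTop (by linarith : (0:ℝ) < 1 - a/2)
    rw [show -(1-a/2) = a/2 - 1 by ring] at h
    exact (h.comp tendsto_natCast_atTop_atTop).eventually (eventually_le_nhds (by norm_num))
  have ev3 : ∀ᶠ n : ℕ in atTop, (100:ℝ) ≤ ((n:ℝ))^(a/2) :=
    ((tendsto_rpow_atTop (by linarith : (0:ℝ) < a/2)).comp
      tendsto_natCast_atTop_atTop).eventually_ge_atTop 100
  have ev4 : ∀ᶠ n : ℕ in atTop, 8 ≤ n := eventually_ge_atTop 8
  obtain ⟨n₀, hn₀⟩ := eventually_atTop.mp (((ev1.and ev2).and ev3).and ev4)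
  refine ⟨n₀, fun n hn x => ?_⟩
  obtain ⟨⟨⟨h100, h8⟩, ht100⟩, hn8⟩ := hn₀ n hn
  obtain ⟨p, hp_def⟩ : ∃ p : ℝ, p = (n:ℝ)^(a-1) - (n:ℝ)^(a/2-1) := ⟨_, rfl⟩
  rw [← hp_def]
  have hn1 : (8:ℝ) ≤ (n:ℝ) := by exact_mod_cast hn8
  have hnpos : (0:ℝ) < n := by linarith
  have hngt1 : (1:ℝ) < n := by linarith
  obtain ⟨t, ht_def⟩ : ∃ t : ℝ, t = (n:ℝ)^(a/2) := ⟨_, rfl⟩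
  have ht100 : 100 ≤ t := by rw [ht_def]; exact ht100
  have ht0 : 0 ≤ t := by rw [ht_def]; exact Real.rpow_nonneg hnpos.le _
  have hta : t^2 = (n:ℝ)^a := by
    rw [ht_def, ← Real.rpow_natCast ((n:ℝ)^(a/2)) 2, ← Real.rpow_mul hnpos.le]
    norm_num
  have e1 : (n:ℝ) * (n:ℝ)^(a-1) = (n:ℝ)^a := by
    have h := Real.rpow_add hnpos 1 (a-1)
    rw [Real.rpow_one, show (1:ℝ)+(a-1) = a by ring] at h
    linarith
  have e2 : (n:ℝ) * (n:ℝ)^(a/2-1) = t := by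
    have h := Real.rpow_add hnpos 1 (a/2-1)
    rw [Real.rpow_one, show (1:ℝ)+(a/2-1) = a/2 by ring] at h
    rw [ht_def]
    linarith
  have hμ : (n:ℝ) * p = t^2 - t := by
    rw [hp_def, mul_sub, e1, e2, ← hta]
  have hp_pos : 0 < p := by
    rw [hp_def, sub_pos]
    exact (Real.rpow_lt_rpow_left_iff hngt1).mpr (by linarith)
  have hp_le : p ≤ 1/100 := by
    have h0 : 0 ≤ (n:ℝ)^(a/2-1) := Real.rpow_nonneg hnpos.le _
    rw [hp_def]
    linarith
  have hq : (99:ℝ)/100 ≤ 1 - p := by linarith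
  have hq1 : 1 - p ≤ 1 := by linarith
  obtain ⟨σ, hσ_def⟩ : ∃ s : ℝ, s = Real.sqrt ((n:ℝ)*p*(1-p)) := ⟨_, rfl⟩
  have hprod_nonneg : 0 ≤ (n:ℝ)*p*(1-p) :=
    mul_nonneg (mul_nonneg hnpos.le hp_pos.le) (by linarith)
  have hμ_lb : t^2 * (99/100) ≤ (n:ℝ)*p := by
    rw [hμ]
    nlinarith [ht100]
  have hσ_lb : 7*t/8 ≤ σ := by
    rw [hσ_def]
    apply (Real.le_sqrt (by positivity) hprod_nonneg).mpr
    have h1 : t^2*(99/100)*(99/100) ≤ (n:ℝ)*p*(1-p) := by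
      nlinarith [hμ_lb, hq, hq1, sq_nonneg t]
    nlinarith [sq_nonneg t]
  have hσ_ub : σ ≤ t := by
    rw [hσ_def]
    have h1 : (n:ℝ)*p*(1-p) ≤ t^2 := by nlinarith [hμ, ht0, mul_nonneg hnpos.le hp_pos.le]
    calc Real.sqrt ((n:ℝ)*p*(1-p)) ≤ Real.sqrt (t^2) := Real.sqrt_le_sqrt h1
      _ = t := Real.sqrt_sq ht0
  have h48 : 48 ≤ σ := by linarith
  have hσ0 : (0:ℝ) ≤ σ := by linarith
  obtain ⟨R, hR_def⟩ : ∃ R : ℕ, R = ⌈(n:ℝ)^a⌉₊ + 3 := ⟨_, rfl⟩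
  rw [← hR_def]
  obtain ⟨L, hL_def⟩ : ∃ L : ℕ, L = ⌈σ⌉₊ := ⟨_, rfl⟩
  have hceil1 : t^2 ≤ (⌈(n:ℝ)^a⌉₊ : ℝ) := by rw [hta]; exact Nat.le_ceil _
  have hceil2 : (⌈(n:ℝ)^a⌉₊ : ℝ) ≤ t^2 + 1 := by
    rw [hta]
    exact (Nat.ceil_lt_add_one (Real.rpow_nonneg hnpos.le a)).le
  have hRcast : (R:ℝ) = (⌈(n:ℝ)^a⌉₊ : ℝ) + 3 := by rw [hR_def]; push_cast; ring
  have hLcast : (L:ℝ) ≤ σ + 1 := by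
    rw [hL_def]
    exact (Nat.ceil_lt_add_one hσ0).le
  have hLge : σ ≤ (L:ℝ) := by rw [hL_def]; exact Nat.le_ceil σ
  have hr1 : (n:ℝ)*p ≤ R := by
    rw [hμ, hRcast]
    linarith
  have hbign : (n:ℝ)*p + 3*σ + 1 ≤ n := by
    have k1 : t^2 ≤ (n:ℝ)/100 := by
      rw [hta, ← e1]
      nlinarith [h100]
    have k2 : t ≤ (n:ℝ)/8 := by
      rw [← e2]
      nlinarith [h8]
    rw [hμ]
    linarith [hσ_ub, ht0]
  have hr2 : (R:ℝ) + L + 1 ≤ (n:ℝ)*p + 3*σ := by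
    rw [hμ, hRcast]
    have h2σ : t + 6 ≤ 2*σ := by linarith
    linarith
  have htail := binom_tail n R L p hp_pos (by linarith) (hσ_def ▸ h48) hr1
    (hσ_def ▸ hr2) (hσ_def ▸ hLge) (hσ_def ▸ hbign)
  obtain ⟨S, hS_def⟩ : ∃ S : Finset (Fin n → Bool), S = (cubeGraph n 1).neighborFinset x :=
    ⟨_, rfl⟩
  have hScard : S.card = n := by rw [hS_def]; exact cube_neighborFinset_card n x
  have hRL_n : R + L ≤ n := by
    have hc : ((R + L : ℕ):ℝ) ≤ (n:ℝ) := by push_cast; linarith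
    exact_mod_cast hc
  have hEq : probEvent p (fun A => R ≤ (A ∩ S).card ∧ (A ∩ S).card ≤ R + L)
      = ∑ k ∈ Icc R (R+L), binT n p k := by
    rw [probEvent_inter_card p S (fun j => R ≤ j ∧ j ≤ R + L), hScard]
    have hsub : Icc R (R+L) ⊆ range (n+1) := by
      intro k hk
      rw [Finset.mem_Icc] at hk
      rw [Finset.mem_range]
      omega
    rw [← Finset.sum_subset hsub (fun j _ hj => by
      rw [Finset.mem_Icc] at hj
      rw [if_neg (by omega)])]
    refine Finset.sum_congr rfl fun j hj => ?_
    rw [Finset.mem_Icc] at hj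
    rw [if_pos (by omega)]
  have hImp : ∀ A : Finset (Fin n → Bool), (R ≤ (A ∩ S).card ∧ (A ∩ S).card ≤ R + L) →
      x ∈ bootSets (cubeGraph n 1) R A 1 := by
    intro A hA
    have hb : bootSets (cubeGraph n 1) R A 1
        = A ∪ Finset.univ.filter
            (fun v => R ≤ ((cubeGraph n 1).neighborFinset v ∩ A).card) := rfl
    rw [hb]
    apply Finset.mem_union_right
    rw [Finset.mem_filter]
    refine ⟨Finset.mem_univ x, ?_⟩
    rw [show (cubeGraph n 1).neighborFinset x = S from hS_def.symm, Finset.inter_comm]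
    exact hA.1
  have hmono := probEvent_mono p hp_pos.le (by linarith) hImp
  calc Real.exp (-97)/9 ≤ ∑ k ∈ Icc R (R+L), binT n p k := htail
    _ = probEvent p (fun A => R ≤ (A ∩ S).card ∧ (A ∩ S).card ≤ R + L) := hEq.symm
    _ ≤ probEvent p (fun A0 => x ∈ bootSets (cubeGraph n 1) R A0 1) := hmono

end
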